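/- arXiv:1205.1377 — 2 statements merged into one kernel-verified Lean document; each statement's English description precedes it below -/
import Mathlib

section
/- Let u₀(θ) = β + cos θ for some β ∈ ℝ, and define u_k for k ≥ 1 by the recursion ((k+n+1)k + n(n−2)/4)u_k + k(k+n−2)u_{k−2} + (n−2)(cosθ/sinθ)u_{k−2}' + u_{k−2}'' = (n(n−2)/4)P_k(u₀,…,u_{k−1}), where P_k = ∑_{p≥2,(p−1)n≤k} C((n+2)/(n−2),p) ∑_{l₁+⋯+l_p=k−(p−1)n} u_{l₁}⋯u_{l_p}, with u_{−1}=0. Then for every k ≥ 1, u_k is a polynomial in cos θ of degree at most k−1. -/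
open Polynomial Finset

noncomputable section

/-- Generalized binomial coefficient `C(x, p)` of a real number `x`. -/
def genBinom (x : ℝ) (p : ℕ) : ℝ :=
  (∏ i ∈ Finset.range p, (x - (i : ℝ))) / (Nat.factorial p : ℝ)

/-- The operator on polynomials in `cos θ` corresponding to `v ↦ (cosθ/sinθ)v′`:
`cotD P = -X·P′`. -/
def cotD (P : Polynomial ℝ) : Polynomial ℝ := -(Polynomial.X * P.derivative)

/-- The operator on polynomials in `cos θ` corresponding to `v ↦ v″`:
`secD P = -X·P′ + (1-X²)·P″`. -/
def secD (P : Polynomial ℝ) : Polynomial ℝ :=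
  -(Polynomial.X * P.derivative) + (1 - Polynomial.X ^ 2) * P.derivative.derivative

/-- `u_{k-2}` with the convention `u_{-1} = 0`. -/
def prevP (U : ℕ → Polynomial ℝ) (k : ℕ) : Polynomial ℝ :=
  if 2 ≤ k then U (k - 2) else 0

/-- The nonlinear source term
`P_k = ∑_{p≥2, (p-1)n≤k} C((n+2)/(n-2), p) ∑_{l₁+⋯+l_p = k-(p-1)n} u_{l₁}⋯u_{l_p}`. -/
def srcP (n k : ℕ) (U : ℕ → Polynomial ℝ) : Polynomial ℝ :=
  ∑ p ∈ Finset.Icc 2 (k / n + 1),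
    Polynomial.C (genBinom (((n : ℝ) + 2) / ((n : ℝ) - 2)) p) *
      ∑ t ∈ Finset.Nat.antidiagonalTuple p (k - (p - 1) * n), ∏ i, U (t i)


lemma natDegree_cotD_le (P : Polynomial ℝ) : (cotD P).natDegree ≤ P.natDegree := by
  unfold cotD
  rw [natDegree_neg]
  rcases Nat.eq_zero_or_pos P.natDegree with h | h
  · have hd : P.derivative = 0 := by
      rw [Polynomial.eq_C_of_natDegree_eq_zero h]; simp
    simp [hd]
  · calc (X * P.derivative).natDegree ≤ X.natDegree + P.derivative.natDegree :=
        natDegree_mul_le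
      _ ≤ 1 + (P.natDegree - 1) :=
        Nat.add_le_add natDegree_X_le (natDegree_derivative_le P)
      _ ≤ P.natDegree := by omega

lemma natDegree_secD_le (P : Polynomial ℝ) : (secD P).natDegree ≤ P.natDegree := by
  have h1 : (-(X * P.derivative)).natDegree ≤ P.natDegree := by
    simpa [cotD] using natDegree_cotD_le P
  unfold secD
  refine le_trans (natDegree_add_le _ _) (max_le h1 ?_)
  by_cases h : P.natDegree ≤ 1
  · have hd : P.derivative.natDegree = 0 := by
      have := natDegree_derivative_le P; omega
    have hdd : P.derivative.derivative = 0 := by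
      rw [Polynomial.eq_C_of_natDegree_eq_zero hd]; simp
    simp [hdd]
  · calc ((1 - X ^ 2) * P.derivative.derivative).natDegree
        ≤ (1 - X ^ 2 : Polynomial ℝ).natDegree + P.derivative.derivative.natDegree :=
        natDegree_mul_le
      _ ≤ 2 + (P.natDegree - 2) := by
          have h2 : (1 - X ^ 2 : Polynomial ℝ).natDegree ≤ 2 := by
            refine le_trans (natDegree_sub_le _ _) ?_
            simp [natDegree_X_pow]
          have h3 : P.derivative.derivative.natDegree ≤ P.natDegree - 2 := by
            have a1 := natDegree_derivative_le P.derivative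
            have a2 := natDegree_derivative_le P
            omega
          exact Nat.add_le_add h2 h3
      _ ≤ P.natDegree := by omega

lemma natDegree_srcP_le (n k : ℕ) (hn : 3 ≤ n) (U : ℕ → Polynomial ℝ)
    (H : ∀ l, l < k → (U l).natDegree ≤ l + 1) :
    (srcP n k U).natDegree ≤ k - 1 := by
  unfold srcP
  apply natDegree_sum_le_of_forall_le
  intro p hp
  rw [Finset.mem_Icc] at hp
  have hn0 : 0 < n := by omega
  have hpn : (p - 1) * n ≤ k := by
    have h1 : p - 1 ≤ k / n := by omega
    exact (Nat.le_div_iff_mul_le hn0).mp h1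
  have hge : n ≤ (p - 1) * n := by
    have : 1 * n ≤ (p - 1) * n := Nat.mul_le_mul_right n (by omega)
    simpa using this
  have hkn : n ≤ k := le_trans hge hpn
  refine le_trans natDegree_mul_le ?_
  rw [natDegree_C, zero_add]
  apply natDegree_sum_le_of_forall_le
  intro t ht
  rw [Finset.Nat.mem_antidiagonalTuple] at ht
  calc (∏ i, U (t i)).natDegree ≤ ∑ i, (U (t i)).natDegree := natDegree_prod_le _ _
    _ ≤ ∑ i, (t i + 1) := by
        apply Finset.sum_le_sum
        intro i _
        apply H
        have hti : t i ≤ k - (p - 1) * n := by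
          rw [← ht]
          exact Finset.single_le_sum (fun j _ => Nat.zero_le _) (Finset.mem_univ i)
        omega
    _ = (k - (p - 1) * n) + p := by
        rw [Finset.sum_add_distrib, ht]; simp
    _ ≤ k - 1 := by
        have h3 : (p - 1) * 3 ≤ (p - 1) * n := Nat.mul_le_mul_left _ hn
        omega

/-- If `u₀(θ) = β + cos θ` and the `u_k` are defined by the Yamabe recursion
`((k+n+1)k + n(n-2)/4)u_k + k(k+n-2)u_{k-2} + (n-2)(cosθ/sinθ)u_{k-2}′ + u_{k-2}″
  = (n(n-2)/4) P_k(u₀,…,u_{k-1})` (with `u_{-1} = 0`), then for every `k ≥ 1`,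
`u_k` is a polynomial in `cos θ` of degree at most `k-1`. -/
theorem uk_polynomial_degree (n : ℕ) (hn : 3 ≤ n) (β : ℝ)
    (U : ℕ → Polynomial ℝ)
    (h0 : U 0 = Polynomial.C β + Polynomial.X)
    (hrec : ∀ k : ℕ, 1 ≤ k →
      Polynomial.C ((((k : ℝ) + n + 1) * k) + (n : ℝ) * ((n : ℝ) - 2) / 4) * U k
        + Polynomial.C ((k * (k + n - 2) : ℕ) : ℝ) * prevP U k
        + Polynomial.C ((n : ℝ) - 2) * cotD (prevP U k)
        + secD (prevP U k)
      = Polynomial.C ((n : ℝ) * ((n : ℝ) - 2) / 4) * srcP n k U) :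
    ∀ k : ℕ, 1 ≤ k → (U k).natDegree ≤ k - 1 := by
  intro k
  induction k using Nat.strong_induction_on with
  | _ k IH =>
    intro hk
    have hcpos : (0:ℝ) < (((k : ℝ) + n + 1) * k) + (n : ℝ) * ((n : ℝ) - 2) / 4 := by
      have h1 : (1:ℝ) ≤ (k:ℝ) := by exact_mod_cast hk
      have h2 : (3:ℝ) ≤ (n:ℝ) := by exact_mod_cast hn
      nlinarith
    have hprev : (prevP U k).natDegree ≤ k - 1 := by
      unfold prevP
      split_ifs with h2
      · rcases Nat.lt_or_ge k 3 with h3 | h3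
        · have hk2 : k = 2 := by omega
          subst hk2
          simp only [show (2:ℕ) - 2 = 0 from rfl, h0]
          refine le_trans (natDegree_add_le _ _) ?_
          simp
        · have := IH (k - 2) (by omega) (by omega)
          omega
      · simp
    have heq : Polynomial.C ((((k : ℝ) + n + 1) * k) + (n : ℝ) * ((n : ℝ) - 2) / 4) * U k
        = Polynomial.C ((n : ℝ) * ((n : ℝ) - 2) / 4) * srcP n k U
          - (Polynomial.C ((k * (k + n - 2) : ℕ) : ℝ) * prevP U k
            + Polynomial.C ((n : ℝ) - 2) * cotD (prevP U k)
            + secD (prevP U k)) := by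
      linear_combination hrec k hk
    have hdeg : (Polynomial.C ((((k : ℝ) + n + 1) * k)
        + (n : ℝ) * ((n : ℝ) - 2) / 4) * U k).natDegree ≤ k - 1 := by
      rw [heq]
      refine le_trans (natDegree_sub_le _ _) (max_le ?_ ?_)
      · refine le_trans natDegree_mul_le ?_
        rw [natDegree_C, zero_add]
        apply natDegree_srcP_le n k hn
        intro l hl
        rcases Nat.eq_zero_or_pos l with rfl | hl1
        · rw [h0]
          exact le_trans (natDegree_add_le _ _) (by simp)
        · have := IH l hl hl1
          omega
      · refine le_trans (natDegree_add_le _ _)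
          (max_le (le_trans (natDegree_add_le _ _) (max_le ?_ ?_)) ?_)
        · refine le_trans natDegree_mul_le ?_
          rw [natDegree_C, zero_add]; exact hprev
        · refine le_trans natDegree_mul_le ?_
          rw [natDegree_C, zero_add]
          exact le_trans (natDegree_cotD_le _) hprev
        · exact le_trans (natDegree_secD_le _) hprev
    rwa [Polynomial.natDegree_C_mul (ne_of_gt hcpos)] at hdeg

end
end

section
/- Let 0 ≤ a_l ≤ α^l/(l+1)² for all l ≥ 0 and p ≥ 2. Then the p-fold convolution S_p(l) := ∑_{l₁+⋯+l_p=l} a_{l₁}⋯a_{l_p} satisfies S_p(l) ≤ α^l π^{2(p−1)}/(l+p)². -/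
open Real Finset

lemma sum_antidiagonalTuple_succ {M : Type*} [AddCommMonoid M] (p n : ℕ)
    (f : (Fin (p + 1) → ℕ) → M) :
    ∑ t ∈ Finset.Nat.antidiagonalTuple (p + 1) n, f t
      = ∑ x ∈ Finset.HasAntidiagonal.antidiagonal n,
          ∑ t ∈ Finset.Nat.antidiagonalTuple p x.2, f (Fin.cons x.1 t) := by
  rw [Finset.sum_sigma']
  refine Finset.sum_nbij'
    (fun t : Fin (p + 1) → ℕ =>
      (⟨(t 0, ∑ i : Fin p, t i.succ), Fin.tail t⟩ : (_ : ℕ × ℕ) × (Fin p → ℕ)))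
    (fun y => Fin.cons y.1.1 y.2) ?_ ?_ ?_ ?_ ?_
  · rintro t ht
    simp only [Finset.Nat.mem_antidiagonalTuple, Fin.sum_univ_succ] at ht
    simp [Finset.mem_sigma, Finset.HasAntidiagonal.mem_antidiagonal,
      Finset.Nat.mem_antidiagonalTuple, Fin.tail, ← ht]
  · rintro ⟨⟨a, b⟩, t⟩ hy
    simp only [Finset.mem_sigma, Finset.HasAntidiagonal.mem_antidiagonal,
      Finset.Nat.mem_antidiagonalTuple] at hy
    rw [Finset.Nat.mem_antidiagonalTuple, Fin.sum_univ_succ]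
    simp only [Fin.cons_zero, Fin.cons_succ]
    rw [hy.2, hy.1]
  · intro t _; simp [Fin.cons_self_tail]
  · rintro ⟨⟨a, b⟩, t⟩ hy
    simp only [Finset.mem_sigma, Finset.HasAntidiagonal.mem_antidiagonal,
      Finset.Nat.mem_antidiagonalTuple] at hy
    simp [Fin.tail_cons, hy.2]
  · intro t _
    simp [Fin.cons_self_tail]

lemma shifted_basel (l k : ℕ) :
    ∑ r ∈ Finset.range (l + 1), (1 : ℝ) / ((r : ℝ) + k) ^ 2 ≤ π ^ 2 / 6 := by
  have h1 : ∑ r ∈ Finset.range (l + 1), (1 : ℝ) / ((r : ℝ) + k) ^ 2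
      = ∑ n ∈ (Finset.range (l + 1)).image (· + k), (1 : ℝ) / (n : ℝ) ^ 2 := by
    rw [Finset.sum_image (by intro x _ y _ h; simp only at h; omega)]
    push_cast
    rfl
  rw [h1]
  exact sum_le_hasSum _ (fun i _ => by positivity) hasSum_zeta_two

lemma two_fold_key (l k : ℕ) (hk : 1 ≤ k) :
    ∑ r ∈ Finset.range (l + 1),
        1 / (((r : ℝ) + 1) ^ 2 * (((l - r : ℕ) : ℝ) + k) ^ 2)
      ≤ π ^ 2 / ((l : ℝ) + k + 1) ^ 2 := by
  have hstep : ∀ r ∈ Finset.range (l + 1),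
      1 / (((r : ℝ) + 1) ^ 2 * (((l - r : ℕ) : ℝ) + k) ^ 2)
        ≤ 2 / ((l : ℝ) + k + 1) ^ 2 *
          (1 / ((r : ℝ) + 1) ^ 2 + 1 / (((l - r : ℕ) : ℝ) + k) ^ 2) := by
    intro r hr
    rw [Finset.mem_range] at hr
    have hrl : r ≤ l := by omega
    have hcast : ((l - r : ℕ) : ℝ) = (l : ℝ) - r := by
      rw [Nat.cast_sub hrl]
    set A : ℝ := (r : ℝ) + 1 with hA
    set B : ℝ := ((l - r : ℕ) : ℝ) + k with hB
    have hApos : 0 < A := by positivity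
    have hBpos : 0 < B := by
      have : (1 : ℝ) ≤ (k : ℝ) := by exact_mod_cast hk
      have h0 : (0:ℝ) ≤ ((l - r : ℕ) : ℝ) := Nat.cast_nonneg _
      linarith
    have hAB : A + B = (l : ℝ) + k + 1 := by rw [hA, hB, hcast]; ring
    have h1 : 1 / (A ^ 2 * B ^ 2) = (1 / (A + B)) ^ 2 * (1 / A + 1 / B) ^ 2 := by
      field_simp
      ring
    have h2 : (1 / A + 1 / B) ^ 2 ≤ 2 * (1 / A ^ 2 + 1 / B ^ 2) := by
      have := sq_nonneg (1 / A - 1 / B)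
      have e1 : (1:ℝ)/A^2 = (1/A)^2 := by rw [div_pow]; norm_num
      have e2 : (1:ℝ)/B^2 = (1/B)^2 := by rw [div_pow]; norm_num
      rw [e1, e2]; nlinarith
    have hABpos : 0 < A + B := by linarith
    calc 1 / (A ^ 2 * B ^ 2) = (1 / (A + B)) ^ 2 * (1 / A + 1 / B) ^ 2 := h1
      _ ≤ (1 / (A + B)) ^ 2 * (2 * (1 / A ^ 2 + 1 / B ^ 2)) := by
          apply mul_le_mul_of_nonneg_left h2 (by positivity)
      _ = 2 / (A + B) ^ 2 * (1 / A ^ 2 + 1 / B ^ 2) := by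
          rw [div_pow]; ring
      _ = 2 / ((l : ℝ) + k + 1) ^ 2 * (1 / A ^ 2 + 1 / B ^ 2) := by rw [hAB]
  calc ∑ r ∈ Finset.range (l + 1),
        1 / (((r : ℝ) + 1) ^ 2 * (((l - r : ℕ) : ℝ) + k) ^ 2)
      ≤ ∑ r ∈ Finset.range (l + 1), 2 / ((l : ℝ) + k + 1) ^ 2 *
          (1 / ((r : ℝ) + 1) ^ 2 + 1 / (((l - r : ℕ) : ℝ) + k) ^ 2) :=
        Finset.sum_le_sum hstep
    _ = 2 / ((l : ℝ) + k + 1) ^ 2 *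
        (∑ r ∈ Finset.range (l + 1), 1 / ((r : ℝ) + 1) ^ 2
          + ∑ r ∈ Finset.range (l + 1), 1 / (((l - r : ℕ) : ℝ) + k) ^ 2) := by
        rw [← Finset.mul_sum, Finset.sum_add_distrib]
    _ ≤ 2 / ((l : ℝ) + k + 1) ^ 2 * (π ^ 2 / 6 + π ^ 2 / 6) := by
        apply mul_le_mul_of_nonneg_left _ (by positivity)
        apply add_le_add
        · have := shifted_basel l 1
          simpa using this
        · have hrefl := Finset.sum_range_reflect
            (fun r => (1 : ℝ) / ((r : ℝ) + k) ^ 2) (l + 1)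
          simp only [Nat.add_sub_cancel] at hrefl
          calc ∑ r ∈ Finset.range (l + 1), 1 / (((l - r : ℕ) : ℝ) + k) ^ 2
              = ∑ r ∈ Finset.range (l + 1), 1 / ((r : ℝ) + k) ^ 2 := hrefl
            _ ≤ π ^ 2 / 6 := shifted_basel l k
    _ ≤ π ^ 2 / ((l : ℝ) + k + 1) ^ 2 := by
        have hpi : (0:ℝ) ≤ π ^ 2 := sq_nonneg _
        have hd : (0:ℝ) < ((l : ℝ) + k + 1) ^ 2 := by positivity
        rw [div_mul_eq_mul_div, div_le_div_iff₀ hd hd]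
        nlinarith

theorem convolution_bound_aux (α : ℝ) (a : ℕ → ℝ)
    (ha0 : ∀ l, 0 ≤ a l) (ha1 : ∀ l, a l ≤ α ^ l / ((l : ℝ) + 1) ^ 2)
    (hα : 0 ≤ α) :
    ∀ p : ℕ, 1 ≤ p → ∀ l : ℕ,
    (∑ t ∈ Finset.Nat.antidiagonalTuple p l, ∏ i, a (t i))
      ≤ α ^ l * π ^ (2 * (p - 1)) / ((l : ℝ) + p) ^ 2 := by
  intro p hp1
  induction p, hp1 using Nat.le_induction with
  | base =>
    intro l
    rw [Finset.Nat.antidiagonalTuple_one, Finset.sum_singleton]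
    simp only [Nat.sub_self, Nat.mul_zero, pow_zero, Nat.cast_one]
    calc ∏ i : Fin 1, a (![l] i) = a l := by simp
      _ ≤ α ^ l / ((l : ℝ) + 1) ^ 2 := ha1 l
      _ = α ^ l * 1 / ((l : ℝ) + 1) ^ 2 := by ring
  | succ p hp ih =>
    intro l
    have hSnonneg : ∀ m, 0 ≤ ∑ t ∈ Finset.Nat.antidiagonalTuple p m, ∏ i, a (t i) :=
      fun m => Finset.sum_nonneg fun t _ => Finset.prod_nonneg fun i _ => ha0 _
    rw [sum_antidiagonalTuple_succ]
    push_cast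
    have hterm : ∀ x ∈ Finset.HasAntidiagonal.antidiagonal l,
        (∑ t ∈ Finset.Nat.antidiagonalTuple p x.2, ∏ i, a ((Fin.cons x.1 t : Fin (p+1) → ℕ) i))
          ≤ α ^ l * π ^ (2 * (p - 1)) *
            (1 / (((x.1 : ℝ) + 1) ^ 2 * ((x.2 : ℝ) + p) ^ 2)) := by
      intro x hx
      rw [Finset.HasAntidiagonal.mem_antidiagonal] at hx
      have h1 : (∑ t ∈ Finset.Nat.antidiagonalTuple p x.2,
          ∏ i, a ((Fin.cons x.1 t : Fin (p+1) → ℕ) i))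
          = a x.1 * ∑ t ∈ Finset.Nat.antidiagonalTuple p x.2, ∏ i, a (t i) := by
        rw [Finset.mul_sum]
        refine Finset.sum_congr rfl fun t _ => ?_
        rw [Fin.prod_univ_succ]
        simp [Fin.cons_zero, Fin.cons_succ]
      rw [h1]
      have h2 : a x.1 * (∑ t ∈ Finset.Nat.antidiagonalTuple p x.2, ∏ i, a (t i))
          ≤ (α ^ x.1 / ((x.1 : ℝ) + 1) ^ 2) *
            (α ^ x.2 * π ^ (2 * (p - 1)) / ((x.2 : ℝ) + p) ^ 2) := by
        apply mul_le_mul (ha1 x.1) (ih x.2) (hSnonneg x.2)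
        positivity
      refine h2.trans (le_of_eq ?_)
      rw [← hx]
      rw [pow_add]
      field_simp
    have hsum := Finset.sum_le_sum hterm
    refine hsum.trans ?_
    rw [← Finset.mul_sum]
    have hkey : ∑ x ∈ Finset.HasAntidiagonal.antidiagonal l,
        (1 : ℝ) / (((x.1 : ℝ) + 1) ^ 2 * ((x.2 : ℝ) + p) ^ 2)
        ≤ π ^ 2 / ((l : ℝ) + p + 1) ^ 2 := by
      rw [Finset.Nat.sum_antidiagonal_eq_sum_range_succ
        (fun i j => (1 : ℝ) / (((i : ℝ) + 1) ^ 2 * ((j : ℝ) + p) ^ 2))]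
      exact two_fold_key l p hp
    calc α ^ l * π ^ (2 * (p - 1)) *
          ∑ x ∈ Finset.HasAntidiagonal.antidiagonal l,
            1 / (((x.1 : ℝ) + 1) ^ 2 * ((x.2 : ℝ) + p) ^ 2)
        ≤ α ^ l * π ^ (2 * (p - 1)) * (π ^ 2 / ((l : ℝ) + p + 1) ^ 2) := by
          apply mul_le_mul_of_nonneg_left hkey (by positivity)
      _ = α ^ l * π ^ (2 * (p + 1 - 1)) / ((l : ℝ) + (p + 1)) ^ 2 := by
          have he : 2 * (p + 1 - 1) = 2 * (p - 1) + 2 := by omega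
          rw [he, pow_add]
          push_cast [Nat.cast_add]
          ring
    

/-- If `0 ≤ a_l ≤ α^l/(l+1)²` for all `l`, then the `p`-fold convolution
`S_p(l) = ∑_{l₁+⋯+l_p = l} a_{l₁}⋯a_{l_p}` satisfies
`S_p(l) ≤ α^l π^{2(p-1)}/(l+p)²`. -/
theorem convolution_bound (α : ℝ) (a : ℕ → ℝ)
    (ha0 : ∀ l, 0 ≤ a l) (ha1 : ∀ l, a l ≤ α ^ l / ((l : ℝ) + 1) ^ 2)
    (p : ℕ) (hp : 2 ≤ p) (l : ℕ) :
    (∑ t ∈ Finset.Nat.antidiagonalTuple p l, ∏ i, a (t i))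
      ≤ α ^ l * π ^ (2 * (p - 1)) / ((l : ℝ) + p) ^ 2 := by
  have hα : 0 ≤ α := by
    have h0 := ha0 1
    have h1 := ha1 1
    norm_num at h1
    nlinarith
  exact convolution_bound_aux α a ha0 ha1 hα p (by omega) l
end
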